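/- Let $T$ be a finite tree and suppose a sequence of trees $S_0 = T, S_1, \dots, S_\ell$ is obtained by, at each step $i$, choosing a set $L_i$ of leaves of $S_i$ no two of which share a neighbour in $S_i$, and setting $S_{i+1} = S_i - L_i$ (possibly retaining one distinguished leaf). Then for each vertex $v \in V(S_\ell)$, the component of $T[(V(T) \setminus V(S_\ell)) \cup \{v\}]$ containing $v$ has at most $2^\ell$ vertices. -/

import Mathlib

private lemma adj_of_walk_support {V : Type*} {G : SimpleGraph V} {a b : V} (hne : a ≠ b)
    (w : G.Walk a b) (hs : ∀ z ∈ w.support, z = a ∨ z = b) : G.Adj a b := by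
  cases w with
  | nil => exact absurd rfl hne
  | @cons _ c _ h p =>
    have hc : c = a ∨ c = b := hs c (by simp [SimpleGraph.Walk.support_cons])
    rcases hc with rfl | rfl
    · exact absurd h (G.irrefl)
    · exact h

private lemma tree_adj_of_two_walks {V : Type*} [DecidableEq V] {G : SimpleGraph V} (hT : G.IsTree)
    {a b : V} (hne : a ≠ b) {P Q : Set V}
    (w1 : G.Walk a b) (h1 : ∀ z ∈ w1.support, z ∈ P)
    (w2 : G.Walk a b) (h2 : ∀ z ∈ w2.support, z ∈ Q)
    (hPQ : ∀ z, z ∈ P → z ∈ Q → z = a ∨ z = b) : G.Adj a b := by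
  obtain ⟨p, -, hp⟩ := hT.existsUnique_path a b
  have e1 : w1.toPath.val = p := hp _ w1.toPath.2
  have e2 : w2.toPath.val = p := hp _ w2.toPath.2
  apply adj_of_walk_support hne w1.toPath.val
  intro z hz
  have hzP : z ∈ P := h1 z (SimpleGraph.Walk.support_toPath_subset w1 hz)
  have hz2 : z ∈ (w2.toPath.val).support := by rw [e2]; rw [e1] at hz; exact hz
  have hzQ : z ∈ Q := h2 z (SimpleGraph.Walk.support_toPath_subset w2 hz2)
  exact hPQ z hzP hzQ

private lemma exists_walk_of_induce_reachable {V : Type*} {G : SimpleGraph V} {A : Set V}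
    {a b : V} (ha : a ∈ A) (hb : b ∈ A)
    (h : (G.induce A).Reachable ⟨a, ha⟩ ⟨b, hb⟩) :
    ∃ w : G.Walk a b, ∀ z ∈ w.support, z ∈ A := by
  obtain ⟨w⟩ := h
  refine ⟨w.map (SimpleGraph.Embedding.induce A).toHom, ?_⟩
  intro z hz
  replace hz : z ∈ (w.map (SimpleGraph.Embedding.induce A).toHom).support := hz
  rw [SimpleGraph.Walk.support_map] at hz
  obtain ⟨⟨z', hz'⟩, -, rfl⟩ := List.mem_map.mp hz
  exact hz'

/-- If a tree `T` is repeatedly pruned, removing at each step a set of leaves no two of which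
share a neighbour, then after `ℓ` rounds, for each remaining vertex `v`, the component of
`T[(V(T) \ V(S_ℓ)) ∪ {v}]` containing `v` has at most `2^ℓ` vertices. -/
theorem stmt7 {V : Type*} [Fintype V] [DecidableEq V]
    (T : SimpleGraph V) (hT : T.IsTree) (ℓ : ℕ) (S : ℕ → Finset V)
    (hS0 : S 0 = Finset.univ)
    (hconn : ∀ i ≤ ℓ, (T.induce (↑(S i) : Set V)).Connected)
    (hsub : ∀ i < ℓ, S (i + 1) ⊆ S i)
    (hleaf : ∀ i < ℓ, ∀ x ∈ S i \ S (i + 1), ∃! y : V, y ∈ S i ∧ T.Adj x y)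
    (hindep : ∀ i < ℓ, ∀ x ∈ S i \ S (i + 1), ∀ x' ∈ S i \ S (i + 1), x ≠ x' →
      ∀ y ∈ S i, ¬(T.Adj x y ∧ T.Adj x' y)) :
    ∀ v ∈ S ℓ,
      ((T.induce ((↑(S ℓ) : Set V)ᶜ ∪ {v})).connectedComponentMk
        ⟨v, Set.mem_union_right _ rfl⟩).supp.ncard ≤ 2 ^ ℓ := by
  induction ℓ with
  | zero =>
    intro v hv
    have key : ∀ u : ↑(((↑(S 0) : Set V))ᶜ ∪ {v}), u = ⟨v, Set.mem_union_right _ rfl⟩ := by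
      rintro ⟨u, hu⟩
      have : u = v := by
        rcases hu with hu | hu
        · exact absurd (by simp [hS0] : u ∈ (↑(S 0) : Set V)) hu
        · exact hu
      subst this; rfl
    have hsupp : ((T.induce ((↑(S 0) : Set V)ᶜ ∪ {v})).connectedComponentMk
        ⟨v, Set.mem_union_right _ rfl⟩).supp ⊆ {⟨v, Set.mem_union_right _ rfl⟩} :=
      fun u _ => key u
    calc ((T.induce ((↑(S 0) : Set V)ᶜ ∪ {v})).connectedComponentMk
        ⟨v, Set.mem_union_right _ rfl⟩).supp.ncard
        ≤ ({⟨v, Set.mem_union_right _ rfl⟩} : Set _).ncard :=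
          Set.ncard_le_ncard hsupp (Set.finite_singleton _)
      _ = 1 := Set.ncard_singleton _
      _ ≤ 2 ^ 0 := by norm_num
  | succ n ih =>
    have IH := ih (fun i hi => hconn i (hi.trans (Nat.le_succ n)))
      (fun i hi => hsub i (hi.trans (Nat.lt_succ_self n)))
      (fun i hi => hleaf i (hi.trans (Nat.lt_succ_self n)))
      (fun i hi => hindep i (hi.trans (Nat.lt_succ_self n)))
    intro v hv
    have hvS : v ∈ S n := hsub n (Nat.lt_succ_self n) hv
    set A : Set V := (↑(S n) : Set V)ᶜ with hA
    set B : Set V := (↑(S (n + 1)) : Set V)ᶜ with hB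
    -- the image in V of the component of y in T[A ∪ {y}]
    let cset : V → Set V := fun y =>
      Subtype.val '' ((T.induce (A ∪ {y})).connectedComponentMk
        ⟨y, Set.mem_union_right _ rfl⟩).supp
    have cset_self : ∀ y, y ∈ cset y := fun y =>
      ⟨⟨y, Set.mem_union_right _ rfl⟩, by simp [SimpleGraph.ConnectedComponent.mem_supp_iff], rfl⟩
    have cset_sub : ∀ y, cset y ⊆ A ∪ {y} := by
      rintro y u ⟨⟨u', hu'⟩, -, rfl⟩; exact hu'
    -- closure of cset under adjacency into A
    have cset_closA : ∀ y u w, u ∈ cset y → w ∈ A → T.Adj u w → w ∈ cset y := by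
      rintro y u w ⟨⟨u', hu'⟩, hmem, rfl⟩ hwA hadj
      refine ⟨⟨w, Or.inl hwA⟩, ?_, rfl⟩
      rw [SimpleGraph.ConnectedComponent.mem_supp_iff] at hmem ⊢
      rw [← hmem]
      apply SimpleGraph.ConnectedComponent.sound
      exact (SimpleGraph.Adj.reachable (by exact hadj :
        (T.induce (A ∪ {y})).Adj ⟨u', hu'⟩ ⟨w, Or.inl hwA⟩)).symm
    -- walks from y to members of cset y
    have cset_walk : ∀ y (hy : y ∈ S n) u, u ∈ cset y →
        ∃ w : T.Walk y u, ∀ z ∈ w.support, z ∈ A ∪ {y} := by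
      rintro y hy u ⟨⟨u', hu'⟩, hmem, rfl⟩
      rw [SimpleGraph.ConnectedComponent.mem_supp_iff] at hmem
      have hr : (T.induce (A ∪ {y})).Reachable ⟨y, Set.mem_union_right _ rfl⟩ ⟨u', hu'⟩ :=
        (SimpleGraph.ConnectedComponent.exact hmem).symm
      exact exists_walk_of_induce_reachable _ _ hr
    -- walks inside S n
    have walk_Sn : ∀ y w, y ∈ S n → w ∈ S n →
        ∃ p : T.Walk y w, ∀ z ∈ p.support, z ∈ (↑(S n) : Set V) := by
      intro y w hy hw
      have hc := hconn n (Nat.le_succ n)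
      exact exists_walk_of_induce_reachable _ _ (hc.preconnected ⟨y, hy⟩ ⟨w, hw⟩)
    have hmemB : ∀ w : V, w ∈ B ↔ w ∉ S (n + 1) := by
      intro w; simp [hB]
    -- key adjacency lemma: if u ∈ cset y, u ∈ A, and w ∈ S n is adjacent to u, then Adj y w
    have key_adj : ∀ y u w, y ∈ S n → u ∈ cset y → u ∈ A → w ∈ S n → w ≠ y →
        T.Adj u w → T.Adj y w := by
      intro y u w hy hu huA hw hwy hadj
      obtain ⟨W1, hW1⟩ := cset_walk y hy u hu
      have hyw : y ≠ w := fun h => hwy h.symm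
      refine tree_adj_of_two_walks hT hyw (P := A ∪ {y} ∪ {w}) (Q := (↑(S n) : Set V))
        (W1.concat hadj) ?_ (walk_Sn y w hy hw).choose
        (walk_Sn y w hy hw).choose_spec ?_
      · intro z hz
        rw [SimpleGraph.Walk.support_concat] at hz
        rw [List.mem_append] at hz
        rcases hz with hz | hz
        · exact Or.inl (hW1 z hz)
        · rw [List.mem_singleton] at hz
          exact Or.inr hz
      · rintro z (hz | rfl) hzS
        · rcases hz with hzA | rfl
          · exact absurd hzS hzA
          · exact Or.inl rfl
        · exact Or.inr rfl
    by_cases hx : ∃ x, (x ∈ S n ∧ x ∉ S (n + 1)) ∧ T.Adj x v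
    · obtain ⟨x, ⟨hxSn, hxnS⟩, hxv⟩ := hx
      have hxmem : x ∈ S n \ S (n + 1) := Finset.mem_sdiff.mpr ⟨hxSn, hxnS⟩
      -- any leaf adjacent to v equals x
      have leaf_adj_v : ∀ w, w ∈ S n → w ∉ S (n + 1) → T.Adj w v → w = x := by
        intro w hwS hwn hadj
        by_contra hne
        exact hindep n (Nat.lt_succ_self n) w (Finset.mem_sdiff.mpr ⟨hwS, hwn⟩) x hxmem hne
          v hvS ⟨hadj, hxv⟩
      -- x's unique neighbour in S n is v
      have x_nbr : ∀ w, w ∈ S n → T.Adj x w → w = v := by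
        intro w hwS hadj
        obtain ⟨y0, -, hy0⟩ := hleaf n (Nat.lt_succ_self n) x hxmem
        have h1 := hy0 w ⟨hwS, hadj⟩
        have h2 := hy0 v ⟨hvS, hxv⟩
        rw [h1, h2]
      set C : Set V := cset v ∪ cset x with hC
      -- closure of C
      have hcl : ∀ u w, u ∈ C → w ∈ B ∪ {v} → T.Adj u w → w ∈ C := by
        intro u w hu hwB hadj
        by_cases hwv : w = v
        · exact hwv ▸ Or.inl (cset_self v)
        by_cases hwx : w = x
        · exact hwx ▸ Or.inr (cset_self x)
        by_cases hwS : w ∈ S n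
        · -- w is a removed leaf, w ≠ v, w ≠ x : derive a contradiction
          exfalso
          have hwn : w ∉ S (n + 1) := by
            rcases hwB with hwB | hwB
            · exact (hmemB w).mp hwB
            · exact absurd hwB hwv
          rcases hu with hu | hu
          · -- u ∈ cset v
            have hadjvw : T.Adj v w := by
              rcases cset_sub v hu with huA | huv
              · exact key_adj v u w hvS hu huA hwS hwv hadj
              · exact huv ▸ hadj
            exact hwx (leaf_adj_v w hwS hwn hadjvw.symm)
          · -- u ∈ cset x
            have hadjxw : T.Adj x w := by
              rcases cset_sub x hu with huA | hux
              · exact key_adj x u w hxSn hu huA hwS hwx hadj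
              · exact hux ▸ hadj
            exact hwv (x_nbr w hwS hadjxw)
        · -- w ∉ S n, so w ∈ A
          have hwA : w ∈ A := hwS
          rcases hu with hu | hu
          · exact Or.inl (cset_closA v u w hu hwA hadj)
          · exact Or.inr (cset_closA x u w hu hwA hadj)
      -- walk induction
      have hwalk : ∀ (a b : ↑(B ∪ {v})) (w : (T.induce (B ∪ {v})).Walk a b),
          a.val ∈ C → b.val ∈ C := by
        intro a b w
        induction w with
        | nil => exact id
        | cons h p ihw =>
          intro ha
          exact ihw (hcl _ _ ha (Subtype.coe_prop _) h)
      -- the component of v in T[B ∪ {v}] is contained in C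
      have himg : Subtype.val '' ((T.induce (B ∪ {v})).connectedComponentMk
          ⟨v, Set.mem_union_right _ rfl⟩).supp ⊆ C := by
        rintro u ⟨⟨u', hu'⟩, hmem, rfl⟩
        rw [SimpleGraph.ConnectedComponent.mem_supp_iff] at hmem
        obtain ⟨w⟩ := (SimpleGraph.ConnectedComponent.exact hmem).symm
        exact hwalk _ _ w (Or.inl (cset_self v))
      -- cardinality bounds
      have hcard : ∀ y, y ∈ S n → (cset y).ncard ≤ 2 ^ n := by
        intro y hy
        have := IH y hy
        rwa [Set.ncard_image_of_injective _ Subtype.val_injective]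
      calc ((T.induce ((↑(S (n + 1)) : Set V)ᶜ ∪ {v})).connectedComponentMk
            ⟨v, Set.mem_union_right _ rfl⟩).supp.ncard
          = (Subtype.val '' ((T.induce (B ∪ {v})).connectedComponentMk
            ⟨v, Set.mem_union_right _ rfl⟩).supp).ncard := by
            rw [Set.ncard_image_of_injective _ Subtype.val_injective]
        _ ≤ C.ncard := Set.ncard_le_ncard himg (Set.toFinite _)
        _ ≤ (cset v).ncard + (cset x).ncard := Set.ncard_union_le _ _
        _ ≤ 2 ^ n + 2 ^ n := Nat.add_le_add (hcard v hvS) (hcard x hxSn)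
        _ = 2 ^ (n + 1) := by ring
    · -- no leaf adjacent to v : the component stays within cset v
      set C : Set V := cset v with hC
      have hcl : ∀ u w, u ∈ C → w ∈ B ∪ {v} → T.Adj u w → w ∈ C := by
        intro u w hu hwB hadj
        by_cases hwv : w = v
        · exact hwv ▸ cset_self v
        by_cases hwS : w ∈ S n
        · exfalso
          have hwn : w ∉ S (n + 1) := by
            rcases hwB with hwB | hwB
            · exact (hmemB w).mp hwB
            · exact absurd hwB hwv
          have hadjvw : T.Adj v w := by
            rcases cset_sub v hu with huA | huv
            · exact key_adj v u w hvS hu huA hwS hwv hadj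
            · exact huv ▸ hadj
          exact hx ⟨w, ⟨hwS, hwn⟩, hadjvw.symm⟩
        · exact cset_closA v u w hu hwS hadj
      have hwalk : ∀ (a b : ↑(B ∪ {v})) (w : (T.induce (B ∪ {v})).Walk a b),
          a.val ∈ C → b.val ∈ C := by
        intro a b w
        induction w with
        | nil => exact id
        | cons h p ihw =>
          intro ha
          exact ihw (hcl _ _ ha (Subtype.coe_prop _) h)
      have himg : Subtype.val '' ((T.induce (B ∪ {v})).connectedComponentMk
          ⟨v, Set.mem_union_right _ rfl⟩).supp ⊆ C := by
        rintro u ⟨⟨u', hu'⟩, hmem, rfl⟩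
        rw [SimpleGraph.ConnectedComponent.mem_supp_iff] at hmem
        obtain ⟨w⟩ := (SimpleGraph.ConnectedComponent.exact hmem).symm
        exact hwalk _ _ w (cset_self v)
      have hcard : (cset v).ncard ≤ 2 ^ n := by
        have := IH v hvS
        rwa [Set.ncard_image_of_injective _ Subtype.val_injective]
      calc ((T.induce ((↑(S (n + 1)) : Set V)ᶜ ∪ {v})).connectedComponentMk
            ⟨v, Set.mem_union_right _ rfl⟩).supp.ncard
          = (Subtype.val '' ((T.induce (B ∪ {v})).connectedComponentMk
            ⟨v, Set.mem_union_right _ rfl⟩).supp).ncard := by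
            rw [Set.ncard_image_of_injective _ Subtype.val_injective]
        _ ≤ C.ncard := Set.ncard_le_ncard himg (Set.toFinite _)
        _ ≤ 2 ^ n := hcard
        _ ≤ 2 ^ (n + 1) := Nat.pow_le_pow_right (by norm_num) (Nat.le_succ n)
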